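/- In R = 𝔽₂[t₁,t₂,t₃], write ρ_a = Σ_{i∈a} t_i for nonempty a ⊆ {1,2,3}. Consider the four quadruples A₁ = (ρ₁, ρ₂, ρ₃, ρ₁₂₃), A₂ = (ρ₁, ρ₁₂, ρ₂₃, ρ₃), A₃ = (ρ₁, ρ₂, ρ₁₃, ρ₂₃), A₄ = (ρ₁, ρ₁₂, ρ₁₃, ρ₁₂₃). Then for every symmetric polynomial f over 𝔽₂ in 4 variables, the element Σ_{i=1}^{4} f(A_i)/σ₄(A_i) of the field of fractions K of R lies in the image of R in K. -/

import Mathlib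

open MvPolynomial

noncomputable section

/-- The polynomial ring `R = 𝔽₂[t₁,t₂,t₃]`. -/
abbrev R3 : Type := MvPolynomial (Fin 3) (ZMod 2)

/-- The field of fractions `K` of `R`. -/
abbrev K3 : Type := FractionRing R3

/-- The canonical map `R → K`. -/
def toK3 : R3 →+* K3 := algebraMap _ _

/-- `ρ₁ = t₁`. -/ def r1 : R3 := X 0
/-- `ρ₂ = t₂`. -/ def r2 : R3 := X 1
/-- `ρ₃ = t₃`. -/ def r3 : R3 := X 2
/-- `ρ₁₂ = t₁ + t₂`. -/ def r12 : R3 := X 0 + X 1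
/-- `ρ₁₃ = t₁ + t₃`. -/ def r13 : R3 := X 0 + X 2
/-- `ρ₂₃ = t₂ + t₃`. -/ def r23 : R3 := X 1 + X 2
/-- `ρ₁₂₃ = t₁ + t₂ + t₃`. -/ def r123 : R3 := X 0 + X 1 + X 2

/-- The localization term `f(A)/σ₄(A)` in `K` attached to a quadruple `A` of
elements of `R` and a polynomial `f` in 4 variables over `𝔽₂`. -/
def trm (A : Fin 4 → R3) (f : MvPolynomial (Fin 4) (ZMod 2)) : K3 :=
  toK3 (aeval A f) / toK3 (∏ i, A i)

/-! ### Auxiliary material -/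

lemma two_eq_zero : (2 : R3) = 0 := by
  rw [← map_ofNat (C : ZMod 2 →+* R3) 2, show (2 : ZMod 2) = 0 by decide, map_zero]

lemma aeval_sub_dvd (ρ : R3) (A B : Fin 4 → R3) (h : ∀ k, ρ ∣ A k - B k)
    (f : MvPolynomial (Fin 4) (ZMod 2)) : ρ ∣ aeval A f - aeval B f := by
  rw [← Ideal.mem_span_singleton, ← Ideal.Quotient.eq, map_aeval, map_aeval]
  have hAB : (fun k => Ideal.Quotient.mk (Ideal.span {ρ}) (A k))
      = fun k => Ideal.Quotient.mk (Ideal.span {ρ}) (B k) := by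
    funext k
    exact Ideal.Quotient.eq.mpr (Ideal.mem_span_singleton.mpr (h k))
  rw [hAB]

lemma pair_dvd (ρ : R3) {f : MvPolynomial (Fin 4) (ZMod 2)} (hf : f.IsSymmetric)
    (Ai Aj : Fin 4 → R3) (σ : Equiv.Perm (Fin 4)) (Mi Mj : R3)
    (hA : ∀ k, ρ ∣ Ai k - Aj (σ k)) (hM : ρ ∣ Mi - Mj) :
    ρ ∣ aeval Ai f * Mi - aeval Aj f * Mj := by
  have hTT : aeval (Aj ∘ σ) f = aeval Aj f := by
    conv_rhs => rw [← hf σ]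
    rw [aeval_rename]
  have hT : ρ ∣ aeval Ai f - aeval Aj f := by
    rw [← hTT]; exact aeval_sub_dvd ρ Ai (Aj ∘ σ) hA f
  have key : aeval Ai f * Mi - aeval Aj f * Mj
      = aeval Ai f * (Mi - Mj) + Mj * (aeval Ai f - aeval Aj f) := by ring
  rw [key]
  exact dvd_add (hM.mul_left _) (hT.mul_left _)

/-! ### Primality of the seven linear forms -/

lemma prime_map (e : R3 ≃ₐ[ZMod 2] R3) {p : R3} (hp : Prime p) : Prime (e p) :=
  (MulEquiv.prime_iff e.toRingEquiv.toMulEquiv).mpr hp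

lemma prime_X0 : Prime (X 0 : R3) := by
  have h := (MulEquiv.prime_iff (MvPolynomial.finSuccEquiv (ZMod 2) 2).toRingEquiv.toMulEquiv
    (p := (X 0 : R3)))
  rw [← h, show (MvPolynomial.finSuccEquiv (ZMod 2) 2).toRingEquiv.toMulEquiv (X 0 : R3)
      = Polynomial.X from finSuccEquiv_X_zero]
  exact Polynomial.prime_X

def mkAut (g : Fin 3 → R3) (h : (aeval g : R3 →ₐ[ZMod 2] R3).comp (aeval g) = AlgHom.id _ _) :
    R3 ≃ₐ[ZMod 2] R3 :=
  AlgEquiv.ofAlgHom (aeval g) (aeval g) h h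

lemma mkAut_apply (g : Fin 3 → R3) (h) (x : R3) : mkAut g h x = aeval g x := rfl

lemma prime_r1 : Prime r1 := prime_X0

lemma prime_r2 : Prime r2 := by
  have h : (aeval ![X 1, X 0, X 2] : R3 →ₐ[ZMod 2] R3).comp (aeval ![X 1, X 0, X 2])
      = AlgHom.id _ _ := by
    apply algHom_ext; intro i; fin_cases i <;> simp
  have := prime_map (mkAut _ h) prime_X0
  rw [mkAut_apply] at this
  simpa [r2] using this

lemma prime_r3 : Prime r3 := by
  have h : (aeval ![X 2, X 1, X 0] : R3 →ₐ[ZMod 2] R3).comp (aeval ![X 2, X 1, X 0])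
      = AlgHom.id _ _ := by
    apply algHom_ext; intro i; fin_cases i <;> simp
  have := prime_map (mkAut _ h) prime_X0
  rw [mkAut_apply] at this
  simpa [r3] using this

lemma prime_r12 : Prime r12 := by
  have h : (aeval ![X 0 + X 1, X 1, X 2] : R3 →ₐ[ZMod 2] R3).comp (aeval ![X 0 + X 1, X 1, X 2])
      = AlgHom.id _ _ := by
    apply algHom_ext; intro i
    fin_cases i <;> simp <;> linear_combination (X 1 : R3) * two_eq_zero
  have := prime_map (mkAut _ h) prime_X0
  rw [mkAut_apply] at this
  simpa [r12] using this

lemma prime_r13 : Prime r13 := by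
  have h : (aeval ![X 0 + X 2, X 1, X 2] : R3 →ₐ[ZMod 2] R3).comp (aeval ![X 0 + X 2, X 1, X 2])
      = AlgHom.id _ _ := by
    apply algHom_ext; intro i
    fin_cases i <;> simp <;> linear_combination (X 2 : R3) * two_eq_zero
  have := prime_map (mkAut _ h) prime_X0
  rw [mkAut_apply] at this
  simpa [r13] using this

lemma prime_r123 : Prime r123 := by
  have h : (aeval ![X 0 + X 1 + X 2, X 1, X 2] : R3 →ₐ[ZMod 2] R3).comp
      (aeval ![X 0 + X 1 + X 2, X 1, X 2]) = AlgHom.id _ _ := by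
    apply algHom_ext; intro i
    fin_cases i <;> simp <;> linear_combination (X 1 + X 2 : R3) * two_eq_zero
  have := prime_map (mkAut _ h) prime_X0
  rw [mkAut_apply] at this
  have e : aeval ![X 0 + X 1 + X 2, X 1, X 2] (X 0 : R3) = r123 := by simp [r123]
  rwa [e] at this

lemma prime_r23 : Prime r23 := by
  have h : (aeval ![X 2, X 1, X 0] : R3 →ₐ[ZMod 2] R3).comp (aeval ![X 2, X 1, X 0])
      = AlgHom.id _ _ := by
    apply algHom_ext; intro i; fin_cases i <;> simp
  have := prime_map (mkAut _ h) prime_r12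
  rw [mkAut_apply] at this
  have e : aeval ![X 2, X 1, X 0] r12 = r23 := by simp [r12, r23]; ring
  rwa [e] at this

/-! ### Non-divisibilities -/

lemma ndvd (v : Fin 3 → ZMod 2) {a b : R3} (ha : eval v a = 0) (hb : eval v b = 1) :
    ¬ a ∣ b := by
  rintro ⟨c, rfl⟩
  rw [map_mul, ha, zero_mul] at hb
  exact one_ne_zero hb.symm

lemma nd_2_1 : ¬ r2 ∣ r1 := ndvd ![1,0,0] (by simp [r2]) (by simp [r1])
lemma nd_3_1 : ¬ r3 ∣ r1 := ndvd ![1,0,0] (by simp [r3]) (by simp [r1])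
lemma nd_3_2 : ¬ r3 ∣ r2 := ndvd ![0,1,0] (by simp [r3]) (by simp [r2])
lemma nd_12_1 : ¬ r12 ∣ r1 := ndvd ![1,1,0] (by simp [r12]; try decide) (by simp [r1])
lemma nd_12_2 : ¬ r12 ∣ r2 := ndvd ![1,1,0] (by simp [r12]; try decide) (by simp [r2])
lemma nd_12_3 : ¬ r12 ∣ r3 := ndvd ![0,0,1] (by simp [r12]) (by simp [r3])
lemma nd_13_1 : ¬ r13 ∣ r1 := ndvd ![1,0,1] (by simp [r13]; try decide) (by simp [r1])
lemma nd_13_2 : ¬ r13 ∣ r2 := ndvd ![0,1,0] (by simp [r13]) (by simp [r2])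
lemma nd_13_3 : ¬ r13 ∣ r3 := ndvd ![1,0,1] (by simp [r13]; try decide) (by simp [r3])
lemma nd_23_1 : ¬ r23 ∣ r1 := ndvd ![1,0,0] (by simp [r23]) (by simp [r1])
lemma nd_23_2 : ¬ r23 ∣ r2 := ndvd ![0,1,1] (by simp [r23]; try decide) (by simp [r2])
lemma nd_23_3 : ¬ r23 ∣ r3 := ndvd ![0,1,1] (by simp [r23]; try decide) (by simp [r3])
lemma nd_13_12 : ¬ r13 ∣ r12 := ndvd ![0,1,0] (by simp [r13]) (by simp [r12])
lemma nd_23_12 : ¬ r23 ∣ r12 := ndvd ![1,0,0] (by simp [r23]) (by simp [r12])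
lemma nd_23_13 : ¬ r23 ∣ r13 := ndvd ![1,0,0] (by simp [r23]) (by simp [r13])
lemma nd_123_1 : ¬ r123 ∣ r1 := ndvd ![1,1,0] (by simp [r123]; try decide) (by simp [r1])
lemma nd_123_2 : ¬ r123 ∣ r2 := ndvd ![1,1,0] (by simp [r123]; try decide) (by simp [r2])
lemma nd_123_3 : ¬ r123 ∣ r3 := ndvd ![0,1,1] (by simp [r123]; try decide) (by simp [r3])
lemma nd_123_12 : ¬ r123 ∣ r12 := ndvd ![1,0,1] (by simp [r123]; try decide) (by simp [r12])
lemma nd_123_13 : ¬ r123 ∣ r13 := ndvd ![1,1,0] (by simp [r123]; try decide) (by simp [r13])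
lemma nd_123_23 : ¬ r123 ∣ r23 := ndvd ![1,1,0] (by simp [r123]; try decide) (by simp [r23])

lemma cancel {p q x : R3} (hp : Prime p) (npq : ¬ p ∣ q) (h : p ∣ q * x) : p ∣ x :=
  ((hp.dvd_mul.mp h)).resolve_left npq

/-! ### Permutations of `Fin 4` -/

def mkP (v w : Fin 4 → Fin 4) (h1 : ∀ x, w (v x) = x) (h2 : ∀ x, v (w x) = x) :
    Equiv.Perm (Fin 4) := ⟨v, w, h1, h2⟩

lemma mkP_apply (v w h1 h2) (k : Fin 4) : mkP v w h1 h2 k = v k := rfl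

def s23 : Equiv.Perm (Fin 4) := mkP ![0,1,3,2] ![0,1,3,2] (by decide) (by decide)
def s13 : Equiv.Perm (Fin 4) := mkP ![0,3,2,1] ![0,3,2,1] (by decide) (by decide)
def s12 : Equiv.Perm (Fin 4) := mkP ![0,2,1,3] ![0,2,1,3] (by decide) (by decide)
def c123 : Equiv.Perm (Fin 4) := mkP ![0,2,3,1] ![0,3,1,2] (by decide) (by decide)
def c132 : Equiv.Perm (Fin 4) := mkP ![0,3,1,2] ![0,2,3,1] (by decide) (by decide)

/-! ### The numerator factors -/

def m1 : R3 := r12 * r13 * r23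
def m2 : R3 := r2 * r13 * r123
def m3 : R3 := r3 * r12 * r123
def m4 : R3 := r2 * r3 * r23
def LL : R3 := r1 * r2 * r3 * r12 * r13 * r23 * r123

set_option maxHeartbeats 2000000

/-- for the four quadruples `A₁ = (ρ₁,ρ₂,ρ₃,ρ₁₂₃)`,
`A₂ = (ρ₁,ρ₁₂,ρ₂₃,ρ₃)`, `A₃ = (ρ₁,ρ₂,ρ₁₃,ρ₂₃)`, `A₄ = (ρ₁,ρ₁₂,ρ₁₃,ρ₁₂₃)` and
every symmetric polynomial `f` over `𝔽₂` in 4 variables,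
`∑ᵢ f(Aᵢ)/σ₄(Aᵢ)` lies in the image of `R` in `K`. -/
theorem stmt_11 :
    ∀ f : MvPolynomial (Fin 4) (ZMod 2), f.IsSymmetric →
      ∃ r : R3,
        trm ![r1, r2, r3, r123] f + trm ![r1, r12, r23, r3] f +
          trm ![r1, r2, r13, r23] f + trm ![r1, r12, r13, r123] f = toK3 r := by
  intro f hf
  set A1 : Fin 4 → R3 := ![r1, r2, r3, r123] with hA1
  set A2 : Fin 4 → R3 := ![r1, r12, r23, r3] with hA2
  set A3 : Fin 4 → R3 := ![r1, r2, r13, r23] with hA3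
  set A4 : Fin 4 → R3 := ![r1, r12, r13, r123] with hA4
  set T1 : R3 := aeval A1 f with hT1
  set T2 : R3 := aeval A2 f with hT2
  set T3 : R3 := aeval A3 f with hT3
  set T4 : R3 := aeval A4 f with hT4
  set N : R3 := T1 * m1 + T2 * m2 + T3 * m3 + T4 * m4 with hN
  -- the seven divisibilities
  have d1 : r1 ∣ N := by
    have p12 := pair_dvd r1 hf A1 A2 s23 m1 m2
      (by intro k; fin_cases k <;>
            simp [hA1, hA2, s23, mkP_apply, r1, r2, r3, r12, r13, r23, r123])
      ⟨X 2 * (X 0 + X 2), by unfold m1 m2 r1 r2 r12 r13 r23 r123; ring⟩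
    have p34 := pair_dvd r1 hf A3 A4 1 m3 m4
      (by intro k; fin_cases k <;>
            simp [hA3, hA4, r1, r2, r3, r12, r13, r23, r123])
      ⟨X 2 * (X 0 + 2 * X 1 + X 2), by unfold m3 m4 r1 r2 r3 r12 r123 r23; ring⟩
    have hdec : N = (T1 * m1 - T2 * m2) + (T3 * m3 - T4 * m4) := by
      linear_combination (T2 * m2 + T4 * m4) * two_eq_zero
    rw [hdec]; exact dvd_add p12 p34
  have d2 : r2 ∣ N := by
    have p13 := pair_dvd r2 hf A1 A3 s23 m1 m3
      (by intro k; fin_cases k <;>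
            simp [hA1, hA3, s23, mkP_apply, r1, r2, r3, r12, r13, r23, r123])
      ⟨X 0 * (X 0 + X 1), by unfold m1 m3 r2 r3 r12 r13 r23 r123; ring⟩
    have div2 : r2 ∣ T2 * m2 :=
      dvd_mul_of_dvd_right ⟨(X 0 + X 2) * (X 0 + X 1 + X 2), by unfold m2 r2 r13 r123; ring⟩ T2
    have div4 : r2 ∣ T4 * m4 :=
      dvd_mul_of_dvd_right ⟨X 2 * (X 1 + X 2), by unfold m4 r2 r3 r23; ring⟩ T4
    have hdec : N = (T1 * m1 - T3 * m3) + (T2 * m2 + T4 * m4) := by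
      linear_combination (T3 * m3) * two_eq_zero
    rw [hdec]; exact dvd_add p13 (dvd_add div2 div4)
  have d3 : r3 ∣ N := by
    have p12 := pair_dvd r3 hf A1 A2 c123 m1 m2
      (by intro k; fin_cases k <;>
            simp [hA1, hA2, c123, mkP_apply, r1, r2, r3, r12, r13, r23, r123])
      ⟨X 0 * (X 0 + X 2), by unfold m1 m2 r2 r3 r12 r13 r23 r123; ring⟩
    have div3 : r3 ∣ T3 * m3 :=
      dvd_mul_of_dvd_right ⟨(X 0 + X 1) * (X 0 + X 1 + X 2), by unfold m3 r3 r12 r123; ring⟩ T3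
    have div4 : r3 ∣ T4 * m4 :=
      dvd_mul_of_dvd_right ⟨X 1 * (X 1 + X 2), by unfold m4 r2 r3 r23; ring⟩ T4
    have hdec : N = (T1 * m1 - T2 * m2) + (T3 * m3 + T4 * m4) := by
      linear_combination (T2 * m2) * two_eq_zero
    rw [hdec]; exact dvd_add p12 (dvd_add div3 div4)
  have d4 : r12 ∣ N := by
    have p24 := pair_dvd r12 hf A2 A4 1 m2 m4
      (by intro k; fin_cases k <;>
            simp [hA2, hA4, r1, r2, r3, r12, r13, r23, r123]
          · exact ⟨-1, by linear_combination (X 1 : R3) * two_eq_zero⟩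
          · exact ⟨-1, by ring⟩)
      (by refine ⟨X 0 * X 1, ?_⟩
          unfold m2 m4 r2 r3 r12 r13 r23 r123
          linear_combination (X 0 * X 1 * X 2 : R3) * two_eq_zero)
    have div1 : r12 ∣ T1 * m1 :=
      dvd_mul_of_dvd_right ⟨(X 0 + X 2) * (X 1 + X 2), by unfold m1 r12 r13 r23; ring⟩ T1
    have div3 : r12 ∣ T3 * m3 :=
      dvd_mul_of_dvd_right ⟨X 2 * (X 0 + X 1 + X 2), by unfold m3 r3 r12 r123; ring⟩ T3
    have hdec : N = (T2 * m2 - T4 * m4) + (T1 * m1 + T3 * m3) := by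
      linear_combination (T4 * m4) * two_eq_zero
    rw [hdec]; exact dvd_add p24 (dvd_add div1 div3)
  have d5 : r13 ∣ N := by
    have p34 := pair_dvd r13 hf A3 A4 s13 m3 m4
      (by intro k; fin_cases k <;>
            simp [hA3, hA4, s13, mkP_apply, r1, r2, r3, r12, r13, r23, r123]
          · exact ⟨-1, by ring⟩
          · exact ⟨-1, by linear_combination (X 2 : R3) * two_eq_zero⟩)
      (by refine ⟨X 0 * X 2, ?_⟩
          unfold m3 m4 r2 r3 r12 r13 r123 r23
          linear_combination (X 0 * X 1 * X 2 : R3) * two_eq_zero)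
    have div1 : r13 ∣ T1 * m1 :=
      dvd_mul_of_dvd_right ⟨(X 0 + X 1) * (X 1 + X 2), by unfold m1 r12 r13 r23; ring⟩ T1
    have div2 : r13 ∣ T2 * m2 :=
      dvd_mul_of_dvd_right ⟨X 1 * (X 0 + X 1 + X 2), by unfold m2 r2 r13 r123; ring⟩ T2
    have hdec : N = (T3 * m3 - T4 * m4) + (T1 * m1 + T2 * m2) := by
      linear_combination (T4 * m4) * two_eq_zero
    rw [hdec]; exact dvd_add p34 (dvd_add div1 div2)
  have d6 : r23 ∣ N := by
    have p32 := pair_dvd r23 hf A3 A2 c132 m3 m2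
      (by intro k; fin_cases k <;>
            simp [hA3, hA2, c132, mkP_apply, r1, r2, r3, r12, r13, r23, r123]
          · exact ⟨-1, by linear_combination (X 1 : R3) * two_eq_zero⟩
          · exact ⟨-1, by linear_combination (X 2 : R3) * two_eq_zero⟩)
      (by refine ⟨-(X 0 * (X 0 + X 1 + X 2)), ?_⟩
          unfold m3 m2 r2 r3 r12 r13 r123 r23
          linear_combination (X 0 * X 2 * (X 0 + X 1 + X 2) : R3) * two_eq_zero)
    have div1 : r23 ∣ T1 * m1 :=
      dvd_mul_of_dvd_right ⟨(X 0 + X 1) * (X 0 + X 2), by unfold m1 r12 r13 r23; ring⟩ T1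
    have div4 : r23 ∣ T4 * m4 :=
      dvd_mul_of_dvd_right ⟨X 1 * X 2, by unfold m4 r2 r3 r23; ring⟩ T4
    have hdec : N = (T3 * m3 - T2 * m2) + (T1 * m1 + T4 * m4) := by
      linear_combination (T2 * m2) * two_eq_zero
    rw [hdec]; exact dvd_add p32 (dvd_add div1 div4)
  have d7 : r123 ∣ N := by
    have p14 := pair_dvd r123 hf A1 A4 s12 m1 m4
      (by intro k; fin_cases k <;>
            simp [hA1, hA4, s12, mkP_apply, r1, r2, r3, r12, r13, r23, r123]
          · exact ⟨-1, by linear_combination (X 1 : R3) * two_eq_zero⟩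
          · exact ⟨-1, by linear_combination (X 2 : R3) * two_eq_zero⟩)
      ⟨X 0 * (X 1 + X 2), by unfold m1 m4 r2 r3 r12 r13 r23 r123; ring⟩
    have div2 : r123 ∣ T2 * m2 :=
      dvd_mul_of_dvd_right ⟨X 1 * (X 0 + X 2), by unfold m2 r2 r13 r123; ring⟩ T2
    have div3 : r123 ∣ T3 * m3 :=
      dvd_mul_of_dvd_right ⟨X 2 * (X 0 + X 1), by unfold m3 r3 r12 r123; ring⟩ T3
    have hdec : N = (T1 * m1 - T4 * m4) + (T2 * m2 + T3 * m3) := by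
      linear_combination (T4 * m4) * two_eq_zero
    rw [hdec]; exact dvd_add p14 (dvd_add div2 div3)
  -- combine into LL ∣ N
  obtain ⟨n1, e1⟩ := d1
  have h := d2; rw [e1] at h
  obtain ⟨n2, e2⟩ := cancel prime_r2 nd_2_1 h
  have h := d3; rw [e1, e2] at h
  obtain ⟨n3, e3⟩ := cancel prime_r3 nd_3_2 (cancel prime_r3 nd_3_1 h)
  have h := d4; rw [e1, e2, e3] at h
  obtain ⟨n4, e4⟩ := cancel prime_r12 nd_12_3 (cancel prime_r12 nd_12_2
      (cancel prime_r12 nd_12_1 h))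
  have h := d5; rw [e1, e2, e3, e4] at h
  obtain ⟨n5, e5⟩ := cancel prime_r13 nd_13_12 (cancel prime_r13 nd_13_3
      (cancel prime_r13 nd_13_2 (cancel prime_r13 nd_13_1 h)))
  have h := d6; rw [e1, e2, e3, e4, e5] at h
  obtain ⟨n6, e6⟩ := cancel prime_r23 nd_23_13 (cancel prime_r23 nd_23_12
      (cancel prime_r23 nd_23_3 (cancel prime_r23 nd_23_2 (cancel prime_r23 nd_23_1 h))))
  have h := d7; rw [e1, e2, e3, e4, e5, e6] at h
  obtain ⟨n7, e7⟩ := cancel prime_r123 nd_123_23 (cancel prime_r123 nd_123_13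
      (cancel prime_r123 nd_123_12 (cancel prime_r123 nd_123_3
      (cancel prime_r123 nd_123_2 (cancel prime_r123 nd_123_1 h)))))
  have eN : N = LL * n7 := by
    rw [e1, e2, e3, e4, e5, e6, e7]; unfold LL; ring
  -- nonzeroness
  have hr1 := prime_r1.ne_zero
  have hr2 := prime_r2.ne_zero
  have hr3 := prime_r3.ne_zero
  have hr12 := prime_r12.ne_zero
  have hr13 := prime_r13.ne_zero
  have hr23 := prime_r23.ne_zero
  have hr123 := prime_r123.ne_zero
  have hm1 : m1 ≠ 0 := mul_ne_zero (mul_ne_zero hr12 hr13) hr23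
  have hm2 : m2 ≠ 0 := mul_ne_zero (mul_ne_zero hr2 hr13) hr123
  have hm3 : m3 ≠ 0 := mul_ne_zero (mul_ne_zero hr3 hr12) hr123
  have hm4 : m4 ≠ 0 := mul_ne_zero (mul_ne_zero hr2 hr3) hr23
  have hLL : LL ≠ 0 :=
    mul_ne_zero (mul_ne_zero (mul_ne_zero (mul_ne_zero (mul_ne_zero (mul_ne_zero
      hr1 hr2) hr3) hr12) hr13) hr23) hr123
  have hinj : Function.Injective toK3 := IsFractionRing.injective R3 K3
  have hmap : ∀ x : R3, x ≠ 0 → toK3 x ≠ 0 := fun x hx => by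
    rw [Ne, map_eq_zero_iff toK3 hinj]; exact hx
  have hLK : toK3 LL ≠ 0 := hmap LL hLL
  -- compute the four denominators and rewrite each term
  have frac : ∀ (A : Fin 4 → R3) (M : R3), M ≠ 0 → (∏ i, A i) * M = LL →
      trm A f = toK3 (aeval A f * M) / toK3 LL := by
    intro A M hM hprod
    unfold trm
    rw [← hprod, map_mul, map_mul, mul_div_mul_right _ _ (hmap M hM)]
  have hp1 : (∏ i, A1 i) * m1 = LL := by
    rw [Fin.prod_univ_four]; simp only [hA1]; unfold m1 LL
    simp [Matrix.cons_val_zero, Matrix.cons_val_one]; ring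
  have hp2 : (∏ i, A2 i) * m2 = LL := by
    rw [Fin.prod_univ_four]; simp only [hA2]; unfold m2 LL
    simp [Matrix.cons_val_zero, Matrix.cons_val_one]; ring
  have hp3 : (∏ i, A3 i) * m3 = LL := by
    rw [Fin.prod_univ_four]; simp only [hA3]; unfold m3 LL
    simp [Matrix.cons_val_zero, Matrix.cons_val_one]; ring
  have hp4 : (∏ i, A4 i) * m4 = LL := by
    rw [Fin.prod_univ_four]; simp only [hA4]; unfold m4 LL
    simp [Matrix.cons_val_zero, Matrix.cons_val_one]; ring
  refine ⟨n7, ?_⟩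
  rw [frac A1 m1 hm1 hp1, frac A2 m2 hm2 hp2, frac A3 m3 hm3 hp3, frac A4 m4 hm4 hp4]
  rw [← add_div, ← add_div, ← add_div]
  rw [← map_add, ← map_add, ← map_add]
  rw [← hT1, ← hT2, ← hT3, ← hT4, ← hN, eN, map_mul]
  exact mul_div_cancel_left₀ _ hLK

end
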